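/- arXiv:1412.3035 — 3 statements merged into one kernel-verified Lean document; each statement's English description precedes it below -/
import Mathlib

section
/- Let f, h be polynomials (over a field with valuation) in n variables, and let g = f·h. Then trop(g)(y) = trop(f)(y) + trop(h)(y) for all y, where trop(p)(y) = min over exponents ν of p of (val(a_ν) + y·ν). Consequently, if the minimum defining trop(f)(y) is attained at least twice, then the minimum defining trop(g)(y) is attained at least twice; hence Trop(f) ⊆ Trop(g). -/
open MvPolynomial

/-- The tropical polynomial of `p = ∑ a_ν x^ν`: `y ↦ min_{ν ∈ supp p} (val(a_ν) + y·ν)`. -/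
noncomputable def trop {K : Type*} [Field K] {n : ℕ}
    (v : AddValuation K (WithTop ℝ)) (p : MvPolynomial (Fin n) K) (y : Fin n → ℝ) :
    WithTop ℝ :=
  p.support.inf fun ν => v (p.coeff ν) + ((∑ i, y i * (ν i : ℝ) : ℝ) : WithTop ℝ)

/-- The tropical hypersurface of `p`: the locus where the minimum is attained at least
twice. -/
noncomputable def tropSet {K : Type*} [Field K] {n : ℕ}
    (v : AddValuation K (WithTop ℝ)) (p : MvPolynomial (Fin n) K) : Set (Fin n → ℝ) :=
  { y | ∃ ν ∈ p.support, ∃ η ∈ p.support, ν ≠ η ∧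
      v (p.coeff ν) + ((∑ i, y i * (ν i : ℝ) : ℝ) : WithTop ℝ) = trop v p y ∧
      v (p.coeff η) + ((∑ i, y i * (η i : ℝ) : ℝ) : WithTop ℝ) = trop v p y }

namespace TropAux

variable {K : Type*} [Field K] {n : ℕ}

/-- The linear functional `ν ↦ y·ν`. -/
noncomputable def lfun (y : Fin n → ℝ) (ν : Fin n →₀ ℕ) : ℝ := ∑ i, y i * (ν i : ℝ)

lemma lfun_add (y : Fin n → ℝ) (μ η : Fin n →₀ ℕ) :
    lfun y (μ + η) = lfun y μ + lfun y η := by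
  simp only [lfun, Finsupp.add_apply, Nat.cast_add, mul_add, Finset.sum_add_distrib]

lemma trop_def (v : AddValuation K (WithTop ℝ)) (p : MvPolynomial (Fin n) K)
    (y : Fin n → ℝ) :
    trop v p y = p.support.inf fun ν => v (p.coeff ν) + ((lfun y ν : ℝ) : WithTop ℝ) := rfl

lemma rearrange (u w : WithTop ℝ) (r t : ℝ) :
    (u + (r : WithTop ℝ)) + (w + (t : WithTop ℝ)) = (u + w) + (((r + t : ℝ)) : WithTop ℝ) := by
  rw [WithTop.coe_add]; abel

/-- cancellation with both coordinates lex-minimal (or, by symmetry, lex-maximal). -/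
lemma lex_uniq {μ' η' μ η : Fin n →₀ ℕ}
    (h1 : toLex μ' ≤ toLex μ) (h2 : toLex η' ≤ toLex η)
    (hsum : μ + η = μ' + η') : μ = μ' ∧ η = η' := by
  have h3 : toLex μ + toLex η = toLex μ' + toLex η' := by
    rw [← toLex_add, ← toLex_add, hsum]
  have h4 : toLex μ + toLex η' = toLex μ' + toLex η' :=
    le_antisymm ((add_le_add_right h2 _).trans h3.le) (add_le_add_left h1 _)
  have hμ : toLex μ = toLex μ' := add_right_cancel h4
  have hμ' : μ = μ' := toLex.injective hμ
  refine ⟨hμ', ?_⟩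
  subst hμ'
  exact add_left_cancel hsum

/-- The lower bound: every term of `trop (f*h)` is at least `trop f + trop h`. -/
lemma lower (v : AddValuation K (WithTop ℝ)) (f h : MvPolynomial (Fin n) K)
    (y : Fin n → ℝ) (ν : Fin n →₀ ℕ) :
    trop v f y + trop v h y ≤ v ((f * h).coeff ν) + ((lfun y ν : ℝ) : WithTop ℝ) := by
  set r : ℝ := lfun y ν with hr
  have key : trop v f y + trop v h y + ((-r : ℝ) : WithTop ℝ) ≤ v ((f * h).coeff ν) := by
    rw [coeff_mul]
    refine v.map_le_sum fun p hp => ?_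
    by_cases h1 : f.coeff p.1 = 0
    · simp [h1]
    by_cases h2 : h.coeff p.2 = 0
    · simp [h2]
    have hp1 : p.1 ∈ f.support := mem_support_iff.mpr h1
    have hp2 : p.2 ∈ h.support := mem_support_iff.mpr h2
    have hA : trop v f y ≤ v (f.coeff p.1) + ((lfun y p.1 : ℝ) : WithTop ℝ) :=
      Finset.inf_le hp1
    have hB : trop v h y ≤ v (h.coeff p.2) + ((lfun y p.2 : ℝ) : WithTop ℝ) :=
      Finset.inf_le hp2
    have hsum : p.1 + p.2 = ν := Finset.HasAntidiagonal.mem_antidiagonal.mp hp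
    have hl : lfun y p.1 + lfun y p.2 = r := by rw [← lfun_add, hsum]
    have step : trop v f y + trop v h y ≤
        (v (f.coeff p.1) + v (h.coeff p.2)) + ((r : ℝ) : WithTop ℝ) := by
      calc trop v f y + trop v h y
          ≤ (v (f.coeff p.1) + ((lfun y p.1 : ℝ) : WithTop ℝ)) +
            (v (h.coeff p.2) + ((lfun y p.2 : ℝ) : WithTop ℝ)) := add_le_add hA hB
        _ = (v (f.coeff p.1) + v (h.coeff p.2)) + (((lfun y p.1 + lfun y p.2 : ℝ)) : WithTop ℝ) :=
            rearrange _ _ _ _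
        _ = (v (f.coeff p.1) + v (h.coeff p.2)) + ((r : ℝ) : WithTop ℝ) := by rw [hl]
    have := add_le_add_left step (((-r : ℝ)) : WithTop ℝ)
    rw [add_assoc (v (f.coeff p.1) + v (h.coeff p.2)), ← WithTop.coe_add, add_neg_cancel,
      WithTop.coe_zero, add_zero] at this
    rw [v.map_mul]
    exact this
  calc trop v f y + trop v h y
      = (trop v f y + trop v h y + ((-r : ℝ) : WithTop ℝ)) + ((r : ℝ) : WithTop ℝ) := by
        rw [add_assoc, ← WithTop.coe_add, neg_add_cancel, WithTop.coe_zero, add_zero]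
    _ ≤ v ((f * h).coeff ν) + ((r : ℝ) : WithTop ℝ) := add_le_add_left key _

/-- The attainment lemma: if `μ'` and `η'` attain the minima for `f` resp. `h`, and the
decomposition of `μ' + η'` into minimizers is unique, then `μ' + η'` lies in the support
of `f*h` and attains the value `trop f + trop h`. -/
lemma attain (v : AddValuation K (WithTop ℝ)) (f h : MvPolynomial (Fin n) K)
    (y : Fin n → ℝ) (μ' η' : Fin n →₀ ℕ)
    (hμs : μ' ∈ f.support) (hηs : η' ∈ h.support)
    (hμm : v (f.coeff μ') + ((lfun y μ' : ℝ) : WithTop ℝ) = trop v f y)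
    (hηm : v (h.coeff η') + ((lfun y η' : ℝ) : WithTop ℝ) = trop v h y)
    (huniq : ∀ μ ∈ f.support, ∀ η ∈ h.support,
      v (f.coeff μ) + ((lfun y μ : ℝ) : WithTop ℝ) = trop v f y →
      v (h.coeff η) + ((lfun y η : ℝ) : WithTop ℝ) = trop v h y →
      μ + η = μ' + η' → μ = μ' ∧ η = η') :
    (μ' + η') ∈ (f * h).support ∧
      v ((f * h).coeff (μ' + η')) + ((lfun y (μ' + η') : ℝ) : WithTop ℝ)
        = trop v f y + trop v h y := by
  set a := v (f.coeff μ') with ha_def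
  set b := v (h.coeff η') with hb_def
  have ha : a ≠ ⊤ := v.ne_top_iff.mpr (mem_support_iff.mp hμs)
  have hb : b ≠ ⊤ := v.ne_top_iff.mpr (mem_support_iff.mp hηs)
  have hab : a + b ≠ ⊤ := WithTop.add_ne_top.mpr ⟨ha, hb⟩
  have hft : trop v f y ≠ ⊤ := by
    rw [← hμm]; exact WithTop.add_ne_top.mpr ⟨ha, WithTop.coe_ne_top⟩
  have hht : trop v h y ≠ ⊤ := by
    rw [← hηm]; exact WithTop.add_ne_top.mpr ⟨hb, WithTop.coe_ne_top⟩
  -- every other term in the convolution has strictly larger valuation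
  have key : ∀ p ∈ (Finset.HasAntidiagonal.antidiagonal (μ' + η')).erase (μ', η'),
      a + b < v (f.coeff p.1 * h.coeff p.2) := by
    intro p hp
    obtain ⟨hpne, hpmem⟩ := Finset.mem_erase.mp hp
    have hsum : p.1 + p.2 = μ' + η' := Finset.HasAntidiagonal.mem_antidiagonal.mp hpmem
    by_cases h1 : f.coeff p.1 = 0
    · rw [h1, zero_mul, v.map_zero]; exact lt_top_iff_ne_top.mpr hab
    by_cases h2 : h.coeff p.2 = 0
    · rw [h2, mul_zero, v.map_zero]; exact lt_top_iff_ne_top.mpr hab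
    have hp1 : p.1 ∈ f.support := mem_support_iff.mpr h1
    have hp2 : p.2 ∈ h.support := mem_support_iff.mpr h2
    have hA : trop v f y ≤ v (f.coeff p.1) + ((lfun y p.1 : ℝ) : WithTop ℝ) :=
      Finset.inf_le hp1
    have hB : trop v h y ≤ v (h.coeff p.2) + ((lfun y p.2 : ℝ) : WithTop ℝ) :=
      Finset.inf_le hp2
    have hne : ¬(v (f.coeff p.1) + ((lfun y p.1 : ℝ) : WithTop ℝ) = trop v f y ∧
        v (h.coeff p.2) + ((lfun y p.2 : ℝ) : WithTop ℝ) = trop v h y) := by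
      rintro ⟨e1, e2⟩
      obtain ⟨eμ, eη⟩ := huniq p.1 hp1 p.2 hp2 e1 e2 hsum
      exact hpne (Prod.ext eμ eη)
    have hstrict : trop v f y + trop v h y <
        (v (f.coeff p.1) + ((lfun y p.1 : ℝ) : WithTop ℝ)) +
        (v (h.coeff p.2) + ((lfun y p.2 : ℝ) : WithTop ℝ)) := by
      rcases not_and_or.mp hne with h1' | h2'
      · have hlt : trop v f y < v (f.coeff p.1) + ((lfun y p.1 : ℝ) : WithTop ℝ) :=
          hA.lt_of_ne (Ne.symm h1')
        calc trop v f y + trop v h y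
            < (v (f.coeff p.1) + ((lfun y p.1 : ℝ) : WithTop ℝ)) + trop v h y :=
              WithTop.add_lt_add_right hht hlt
          _ ≤ _ := add_le_add_right hB _
      · have hlt : trop v h y < v (h.coeff p.2) + ((lfun y p.2 : ℝ) : WithTop ℝ) :=
          hB.lt_of_ne (Ne.symm h2')
        calc trop v f y + trop v h y
            ≤ (v (f.coeff p.1) + ((lfun y p.1 : ℝ) : WithTop ℝ)) + trop v h y :=
              add_le_add_left hA _
          _ < _ := WithTop.add_lt_add_left
              (WithTop.add_ne_top.mpr ⟨v.ne_top_iff.mpr h1, WithTop.coe_ne_top⟩) hlt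
    have hl : lfun y p.1 + lfun y p.2 = lfun y μ' + lfun y η' := by
      rw [← lfun_add, ← lfun_add, hsum]
    rw [rearrange, hl] at hstrict
    rw [← hμm, ← hηm, rearrange] at hstrict
    rw [v.map_mul]
    exact (WithTop.add_lt_add_iff_right WithTop.coe_ne_top).mp hstrict
  have hmem : ((μ', η') : (Fin n →₀ ℕ) × (Fin n →₀ ℕ)) ∈ Finset.HasAntidiagonal.antidiagonal (μ' + η') :=
    Finset.HasAntidiagonal.mem_antidiagonal.mpr rfl
  have hceq : v ((f * h).coeff (μ' + η')) = a + b := by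
    rw [coeff_mul, ← Finset.add_sum_erase _ _ hmem]
    have hrest : v (f.coeff μ' * h.coeff η') <
        v (∑ p ∈ (Finset.HasAntidiagonal.antidiagonal (μ' + η')).erase (μ', η'),
          f.coeff p.1 * h.coeff p.2) := by
      rw [v.map_mul]
      exact v.map_lt_sum hab key
    rw [v.map_add_eq_of_lt_left hrest, v.map_mul]
  constructor
  · refine mem_support_iff.mpr fun h0 => ?_
    rw [h0, v.map_zero] at hceq
    exact hab hceq.symm
  · rw [hceq, lfun_add, ← hμm, ← hηm, rearrange]

/-- The minimizer set of `p` at `y`. -/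
noncomputable def minSet (v : AddValuation K (WithTop ℝ)) (p : MvPolynomial (Fin n) K)
    (y : Fin n → ℝ) : Finset (Fin n →₀ ℕ) :=
  p.support.filter fun ν => v (p.coeff ν) + ((lfun y ν : ℝ) : WithTop ℝ) = trop v p y

lemma minSet_nonempty (v : AddValuation K (WithTop ℝ)) {p : MvPolynomial (Fin n) K}
    (hp : p ≠ 0) (y : Fin n → ℝ) : (minSet v p y).Nonempty := by
  obtain ⟨ν, hν, hmin⟩ := Finset.exists_mem_eq_inf p.support
    (support_nonempty.mpr hp) fun ν => v (p.coeff ν) + ((lfun y ν : ℝ) : WithTop ℝ)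
  exact ⟨ν, Finset.mem_filter.mpr ⟨hν, hmin.symm⟩⟩

lemma mem_minSet {v : AddValuation K (WithTop ℝ)} {p : MvPolynomial (Fin n) K}
    {y : Fin n → ℝ} {ν : Fin n →₀ ℕ} :
    ν ∈ minSet v p y ↔ ν ∈ p.support ∧
      v (p.coeff ν) + ((lfun y ν : ℝ) : WithTop ℝ) = trop v p y := Finset.mem_filter

end TropAux

open TropAux in
/-- For `g = f·h` over a valued field, `trop(g) = trop(f) + trop(h)`, and consequently
`Trop(f) ⊆ Trop(g)`. -/
theorem stmt4 {K : Type*} [Field K] {n : ℕ}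
    (v : AddValuation K (WithTop ℝ)) (f h : MvPolynomial (Fin n) K)
    (hf : f ≠ 0) (hh : h ≠ 0) :
    (∀ y, trop v (f * h) y = trop v f y + trop v h y) ∧
    tropSet v f ⊆ tropSet v (f * h) := by
  -- lex-minimal and lex-maximal minimizers and the resulting attainments
  have main : ∀ y : Fin n → ℝ,
      ∃ νm νM : Fin n →₀ ℕ,
        (νm ∈ (f * h).support ∧
          v ((f * h).coeff νm) + ((lfun y νm : ℝ) : WithTop ℝ) = trop v f y + trop v h y) ∧
        (νM ∈ (f * h).support ∧
          v ((f * h).coeff νM) + ((lfun y νM : ℝ) : WithTop ℝ) = trop v f y + trop v h y) ∧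
        (∀ μ1 μ2 : Fin n →₀ ℕ, μ1 ∈ minSet v f y → μ2 ∈ minSet v f y → μ1 ≠ μ2 →
          νm ≠ νM) := by
    intro y
    obtain ⟨μm, hμm, hμmin⟩ := Finset.exists_min_image (minSet v f y) toLex
      (minSet_nonempty v hf y)
    obtain ⟨μM, hμM, hμmax⟩ := Finset.exists_max_image (minSet v f y) toLex
      (minSet_nonempty v hf y)
    obtain ⟨ηm, hηm, hηmin⟩ := Finset.exists_min_image (minSet v h y) toLex
      (minSet_nonempty v hh y)
    obtain ⟨ηM, hηM, hηmax⟩ := Finset.exists_max_image (minSet v h y) toLex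
      (minSet_nonempty v hh y)
    refine ⟨μm + ηm, μM + ηM, ?_, ?_, ?_⟩
    · exact attain v f h y μm ηm (mem_minSet.mp hμm).1 (mem_minSet.mp hηm).1
        (mem_minSet.mp hμm).2 (mem_minSet.mp hηm).2
        (fun μ hμ η hη e1 e2 hsum =>
          lex_uniq (hμmin μ (mem_minSet.mpr ⟨hμ, e1⟩)) (hηmin η (mem_minSet.mpr ⟨hη, e2⟩)) hsum)
    · exact attain v f h y μM ηM (mem_minSet.mp hμM).1 (mem_minSet.mp hηM).1
        (mem_minSet.mp hμM).2 (mem_minSet.mp hηM).2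
        (fun μ hμ η hη e1 e2 hsum => by
          have := lex_uniq (μ' := μ) (η' := η) (μ := μM) (η := ηM)
            (hμmax μ (mem_minSet.mpr ⟨hμ, e1⟩)) (hηmax η (mem_minSet.mpr ⟨hη, e2⟩)) hsum.symm
          exact ⟨this.1.symm, this.2.symm⟩)
    · intro μ1 μ2 h1 h2 hne12
      -- then μm ≠ μM, whence the two sums are distinct
      have hmM : toLex μm < toLex μM := by
        rcases lt_or_eq_of_le (hμmin μM hμM) with hlt | heq
        · exact hlt
        · exfalso
          have e1 : toLex μ1 = toLex μm :=
            le_antisymm (heq ▸ hμmax μ1 h1) (hμmin μ1 h1)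
          have e2 : toLex μ2 = toLex μm :=
            le_antisymm (heq ▸ hμmax μ2 h2) (hμmin μ2 h2)
          exact hne12 (toLex.injective (e1.trans e2.symm))
      intro hEq
      have : toLex (μm + ηm) < toLex (μM + ηM) := by
        rw [toLex_add, toLex_add]
        calc toLex μm + toLex ηm < toLex μM + toLex ηm := add_lt_add_left hmM _
          _ ≤ toLex μM + toLex ηM := add_le_add_right (hηmin ηM hηM) _
      rw [hEq] at this
      exact lt_irrefl _ this
  have part1 : ∀ y, trop v (f * h) y = trop v f y + trop v h y := by
    intro y
    obtain ⟨νm, _, ⟨hmem, hval⟩, _, _⟩ := main y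
    refine le_antisymm ?_ ?_
    · rw [trop_def]
      calc (f * h).support.inf (fun ν => v ((f*h).coeff ν) + ((lfun y ν : ℝ) : WithTop ℝ))
          ≤ v ((f * h).coeff νm) + ((lfun y νm : ℝ) : WithTop ℝ) := Finset.inf_le hmem
        _ = trop v f y + trop v h y := hval
    · rw [trop_def]
      exact Finset.le_inf fun ν _ => lower v f h y ν
  refine ⟨part1, ?_⟩
  intro y hy
  obtain ⟨ν, hν, η, hη, hneq, hν2, hη2⟩ := hy
  obtain ⟨νm, νM, ⟨hmmem, hmval⟩, ⟨hMmem, hMval⟩, hdist⟩ := main y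
  have hν' : ν ∈ minSet v f y := mem_minSet.mpr ⟨hν, hν2⟩
  have hη' : η ∈ minSet v f y := mem_minSet.mpr ⟨hη, hη2⟩
  refine ⟨νm, hmmem, νM, hMmem, hdist ν η hν' hη' hneq, ?_, ?_⟩
  · show v ((f*h).coeff νm) + ((lfun y νm : ℝ) : WithTop ℝ) = trop v (f*h) y
    rw [part1 y]; exact hmval
  · show v ((f*h).coeff νM) + ((lfun y νM : ℝ) : WithTop ℝ) = trop v (f*h) y
    rw [part1 y]; exact hMval
end

section
/- Let C be a one-dimensional weighted fan in ℝⁿ with rays generated by primitive integer vectors v_1, …, v_s and positive integer weights ω_1, …, ω_s satisfying the balancing condition Σ ω_i v_i = 0. If p: ℝⁿ → ℝᵐ is a linear map with integer matrix, then the pushed-forward weighted fan, with rays p(v_i) (for those i with p(v_i) ≠ 0) and weights obtained by summing ω_i · (lattice index of p(v_i) relative to the primitive generator of its ray) over rays mapping to the same image ray, is again balanced: the weighted sum of primitive generators of image rays is 0. -/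
open scoped Classical

/-- A vector of `ℤ^k` is primitive if the gcd of its coordinates is `1`. -/
def IsPrimitiveVec {k : ℕ} (x : Fin k → ℤ) : Prop :=
  Finset.univ.gcd (fun j => (x j).natAbs) = 1

/-- Push-forward of a balanced weighted one-dimensional fan along an integer linear map
is balanced: if `∑ ωᵢ vᵢ = 0` with `vᵢ` primitive and `ωᵢ > 0`, and for each `i` with
`p(vᵢ) ≠ 0` we write `p(vᵢ) = λᵢ wᵢ` with `wᵢ` primitive and `λᵢ > 0`, then the weighted
sum over the distinct image primitive generators `u`, with weight `∑_{i : wᵢ = u} ωᵢ λᵢ`,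
is zero. -/
theorem stmt10 {n m : ℕ} {ι : Type} [Fintype ι]
    (p : (Fin n → ℤ) →ₗ[ℤ] (Fin m → ℤ))
    (v : ι → Fin n → ℤ) (ω : ι → ℤ) (hω : ∀ i, 0 < ω i)
    (hvprim : ∀ i, IsPrimitiveVec (v i))
    (hbal : ∑ i, ω i • v i = 0)
    (lam : ι → ℤ) (w : ι → Fin m → ℤ)
    (hw : ∀ i, p (v i) ≠ 0 → 0 < lam i ∧ IsPrimitiveVec (w i) ∧ p (v i) = lam i • w i) :
    ∑ u ∈ (Finset.univ.filter fun i => p (v i) ≠ 0).image w,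
      (∑ i ∈ Finset.univ.filter (fun i => p (v i) ≠ 0 ∧ w i = u), ω i * lam i) • u
      = (0 : Fin m → ℤ) := by
  set S := Finset.univ.filter fun i => p (v i) ≠ 0 with hS
  have key : ∑ u ∈ S.image w, (∑ i ∈ Finset.univ.filter (fun i => p (v i) ≠ 0 ∧ w i = u),
        ω i * lam i) • u = ∑ i ∈ S, (ω i * lam i) • w i := by
    apply Finset.sum_image' (h := fun i => (ω i * lam i) • w i)
    intro c hc
    rw [Finset.sum_smul]
    apply Finset.sum_congr
    · ext i
      simp [hS, Finset.mem_filter]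
    · intro i hi
      simp only [Finset.mem_filter] at hi
      rw [hi.2]
  rw [key]
  have h2 : ∀ i ∈ S, (ω i * lam i) • w i = ω i • p (v i) := by
    intro i hi
    simp only [hS, Finset.mem_filter] at hi
    rw [(hw i hi.2).2.2, smul_smul]
  rw [Finset.sum_congr rfl h2]
  have h3 : ∑ i ∈ S, ω i • p (v i) = ∑ i, ω i • p (v i) := by
    apply Finset.sum_subset (Finset.subset_univ _)
    intro i _ hiS
    simp only [hS, Finset.mem_filter, Finset.mem_univ, true_and, not_not] at hiS
    rw [hiS, smul_zero]
  rw [h3]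
  have : ∑ i, ω i • p (v i) = p (∑ i, ω i • v i) := by
    rw [map_sum]
    exact Finset.sum_congr rfl fun i _ => (map_smul p _ _).symm
  rw [this, hbal, map_zero]
end

section
/- For integers d ≥ 1 and indices with k + n ≤ d, l ≤ n+1, m ≤ k+1, the linear combination S = Σ_{i=k}^{d-n} Σ_{j=0}^{d-i} (-1)^{i-k+l-1-j} C(i-m, i-k) C(d-i-n+l-1-j, d-i-n) b_{(i,j)}, where b_{(i,j)} = Σ_{s=0}^{i} Σ_{t=0}^{d-i-j} (-1)^{d-t-s} C(d-t-s, i-s) C(d-i-t, j) a_{(d-t-s,s)}, when expanded as a linear combination of the variables a_{(d-t-s,s)}, has coefficient of a_{(d-t-s,s)} equal to zero whenever n ≤ t ≤ d-k and m ≤ s < d-t-k+m. -/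
open Finset

def Gsum (a : ℕ) (f : ℕ → ℤ) : ℤ := ∑ q ∈ Finset.range (a+1), (-1)^q * (a.choose q) * f q

lemma Gsum_succ (a : ℕ) (f : ℕ → ℤ) :
    Gsum (a+1) f = Gsum a f - Gsum a (fun q => f (q+1)) := by
  unfold Gsum
  have e1 : ∑ q ∈ Finset.range (a+1+1), (-1:ℤ)^q * ((a+1).choose q) * f q
      = (∑ q ∈ Finset.range (a+1), (-1:ℤ)^(q+1) * ((a+1).choose (q+1)) * f (q+1)) + f 0 := by
    rw [Finset.sum_range_succ']; simp
  have e2 : ∑ q ∈ Finset.range (a+1+1), (-1:ℤ)^q * (a.choose q) * f q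
      = (∑ q ∈ Finset.range (a+1), (-1:ℤ)^(q+1) * (a.choose (q+1)) * f (q+1)) + f 0 := by
    rw [Finset.sum_range_succ']; simp
  have e3 : ∑ q ∈ Finset.range (a+1+1), (-1:ℤ)^q * (a.choose q) * f q
      = ∑ q ∈ Finset.range (a+1), (-1:ℤ)^q * (a.choose q) * f q := by
    rw [Finset.sum_range_succ, Nat.choose_succ_self]; simp
  have e4 : ∀ q, (-1:ℤ)^(q+1) * ((a+1).choose (q+1)) * f (q+1)
      = -((-1:ℤ)^q * (a.choose q) * f (q+1)) + (-1:ℤ)^(q+1) * (a.choose (q+1)) * f (q+1) := by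
    intro q; rw [Nat.choose_succ_succ]; push_cast; ring
  rw [e1]
  calc (∑ q ∈ Finset.range (a+1), (-1:ℤ)^(q+1) * ((a+1).choose (q+1)) * f (q+1)) + f 0
      = ((∑ q ∈ Finset.range (a+1), -((-1:ℤ)^q * (a.choose q) * f (q+1)))
        + ∑ q ∈ Finset.range (a+1), (-1:ℤ)^(q+1) * (a.choose (q+1)) * f (q+1)) + f 0 := by
        rw [← Finset.sum_add_distrib]; exact congrArg (· + f 0) (Finset.sum_congr rfl fun q _ => e4 q)
    _ = -(∑ q ∈ Finset.range (a+1), (-1:ℤ)^q * (a.choose q) * f (q+1))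
        + ((∑ q ∈ Finset.range (a+1), (-1:ℤ)^(q+1) * (a.choose (q+1)) * f (q+1)) + f 0) := by
        rw [Finset.sum_neg_distrib]; ring
    _ = -(∑ q ∈ Finset.range (a+1), (-1:ℤ)^q * (a.choose q) * f (q+1))
        + ∑ q ∈ Finset.range (a+1), (-1:ℤ)^q * (a.choose q) * f q := by rw [← e2, e3]
    _ = _ := by ring

-- identity 1 (zero form): ∑ (-1)^q C(a,q) C(b+q, c) = 0 for c < a, b : ℤ
lemma Gsum_choose_add (c : ℕ) : ∀ a : ℕ, ∀ b : ℤ, c < a →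
    Gsum a (fun q => Ring.choose (b + q) c) = 0 := by
  induction c with
  | zero =>
    intro a b hc
    obtain ⟨a', rfl⟩ := Nat.exists_eq_add_of_lt hc
    rw [Nat.zero_add, Gsum_succ]
    simp [Ring.choose_zero_right]
  | succ c ih =>
    intro a b hc
    obtain ⟨a', rfl⟩ : ∃ a', a = a' + 1 := ⟨a - 1, by omega⟩
    rw [Gsum_succ]
    have hsub : Gsum a' (fun q => Ring.choose (b + q) (c+1))
        - Gsum a' (fun q => Ring.choose (b + ((q:ℕ)+1 : ℕ)) (c+1))
        = - Gsum a' (fun q => Ring.choose (b + q) c) := by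
      unfold Gsum
      rw [← Finset.sum_sub_distrib, ← Finset.sum_neg_distrib]
      refine Finset.sum_congr rfl fun q _ => ?_
      simp only [Nat.cast_add, Nat.cast_one]
      have hp : Ring.choose (b + (q+1) : ℤ) (c+1)
          = Ring.choose (b + q) c + Ring.choose (b + q) (c+1) := by
        have := Ring.choose_succ_succ (b + (q:ℤ)) c
        rw [← this]; ring_nf
      rw [hp]; ring
    rw [hsub, ih a' b (by omega), neg_zero]


lemma choose_int_natCast (n k : ℕ) : Ring.choose ((n : ℤ)) k = (n.choose k : ℤ) :=
  Ring.choose_natCast n k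

lemma choose_int_eq_zero {x : ℤ} {k : ℕ} (h0 : 0 ≤ x) (h : x < k) : Ring.choose x k = 0 := by
  obtain ⟨n, rfl⟩ := Int.eq_ofNat_of_zero_le h0
  rw [choose_int_natCast, Nat.choose_eq_zero_of_lt (by exact_mod_cast h), Nat.cast_zero]

-- LemA
lemma Gsum_choose_sub : ∀ (a : ℕ) (b : ℤ) (c : ℕ), a ≤ c →
    Gsum a (fun j => Ring.choose (b - j) c) = Ring.choose (b - a) (c - a) := by
  intro a
  induction a with
  | zero => intro b c _; simp [Gsum]
  | succ a ih =>
    intro b c hac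
    obtain ⟨e, he⟩ : ∃ e, c - a = e + 1 := ⟨c - (a+1), by omega⟩
    rw [Gsum_succ]
    have h2 : (Gsum a fun q => (fun j => Ring.choose (b - (j:ℕ)) c) (q + 1))
        = Ring.choose ((b-1) - a) (c - a) := by
      rw [show (fun q => (fun j => Ring.choose (b - (j:ℕ)) c) (q + 1))
          = (fun q => Ring.choose ((b-1) - (q:ℕ)) c) by funext q; push_cast; ring_nf]
      exact ih (b-1) c (by omega)
    rw [h2, ih b c (by omega), he]
    have hp := Ring.choose_succ_succ ((b - a - 1 : ℤ)) e
    rw [show (b - (a:ℤ) - 1) + 1 = b - a by ring] at hp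
    rw [show c - (a+1) = e by omega, show b - ((a:ℕ)+1 : ℕ) = b - a - 1 by push_cast; ring]
    rw [show b - 1 - (a:ℤ) = b - a - 1 by ring]
    linarith [hp]

-- reflection
lemma choose_int_neg : ∀ (r : ℕ) (c : ℕ), Ring.choose (-(c:ℤ) - 1) r = (-1)^r * ((r + c).choose r) := by
  intro r
  induction r with
  | zero => intro c; simp [Ring.choose_zero_right]
  | succ r ihr =>
    intro c
    induction c with
    | zero =>
      have hp := Ring.choose_succ_succ ((-1 : ℤ)) r
      rw [show (-1 : ℤ) + 1 = ((0:ℕ) : ℤ) by ring, choose_int_natCast, Nat.choose_zero_succ] at hp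
      have h0 : Ring.choose (-((0:ℕ):ℤ) - 1) (r+1) = - Ring.choose (-((0:ℕ):ℤ) - 1) r := by
        rw [show -((0:ℕ):ℤ) - 1 = -1 by ring]
        omega
      rw [h0, ihr 0]
      simp [pow_succ]
    | succ c ihc =>
      have hp := Ring.choose_succ_succ ((-(c:ℤ) - 2)) r
      rw [show -(c:ℤ) - 2 + 1 = -(c:ℤ) - 1 by ring] at hp
      have key : Ring.choose (-((c+1:ℕ):ℤ) - 1) (r+1)
          = Ring.choose (-(c:ℤ) - 1) (r+1) - Ring.choose (-((c+1:ℕ):ℤ) - 1) r := by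
        rw [show -((c+1:ℕ):ℤ) - 1 = -(c:ℤ) - 2 by push_cast; ring]
        omega
      rw [key, ihc, ihr (c+1)]
      rw [show r + 1 + (c + 1) = (r + c + 1) + 1 by omega, Nat.choose_succ_succ,
        show r + (c+1) = r + c + 1 by omega, show r + 1 + c = r + c + 1 by omega]
      push_cast
      ring

-- Vandermonde range form
lemma choose_int_vandermonde (x : ℤ) (N A : ℕ) :
    Ring.choose (x + (N:ℤ)) A
      = ∑ r ∈ Finset.range (A+1), Ring.choose x r * ((N.choose (A - r) : ℤ)) := by
  rw [Ring.add_choose_eq A (mul_comm x (N:ℤ)), Finset.Nat.sum_antidiagonal_eq_sum_range_succ_mk]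
  refine Finset.sum_congr rfl fun r _ => ?_
  rw [choose_int_natCast]


lemma keysum (d k n m t s : ℕ) (hm : m ≤ k + 1) (hkt : k + t ≤ d) (hnt : n ≤ t)
    (hs : m ≤ s) (hsh : s + t + k < d + m) :
    ∑ i ∈ Finset.Icc k (d - n),
      (if s ≤ i ∧ i + t ≤ d then
        (-1:ℤ)^(i-k) * ((i-m).choose (i-k)) * (((d-t-s).choose (i-s) : ℤ)) else 0) = 0 := by
  have hstd : s + t ≤ d := by omega
  -- restrict to Icc k (d - t)
  have hsub : Finset.Icc k (d - t) ⊆ Finset.Icc k (d - n) := by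
    apply Finset.Icc_subset_Icc_right; omega
  rw [← Finset.sum_subset hsub (fun i hi hni => by
    rw [if_neg]
    simp only [Finset.mem_Icc] at hi hni
    intro ⟨h1, h2⟩; exact hni ⟨hi.1, by omega⟩)]
  -- simplify condition on Icc k (d - t)
  rw [Finset.sum_congr rfl (fun i hi => show _ = if s ≤ i then
      (-1:ℤ)^(i-k) * ((i-m).choose (i-k)) * (((d-t-s).choose (i-s) : ℤ)) else 0 by
    simp only [Finset.mem_Icc] at hi
    by_cases hsi : s ≤ i
    · rw [if_pos ⟨hsi, by omega⟩, if_pos hsi]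
    · rw [if_neg (fun h => hsi h.1), if_neg hsi])]
  by_cases hmk : m = k + 1
  · apply Finset.sum_eq_zero
    intro i hi
    simp only [Finset.mem_Icc] at hi
    by_cases hsi : s ≤ i
    · rw [if_pos hsi, Nat.choose_eq_zero_of_lt (by omega), Nat.cast_zero]
      ring
    · rw [if_neg hsi]
  · have hmk' : m ≤ k := by omega
    set N := d - t - s with hN
    set c := k - m with hc
    by_cases hsk : s ≤ k
    · -- no indicator; Vandermonde
      rw [Finset.sum_congr rfl (fun i hi => by
        simp only [Finset.mem_Icc] at hi
        exact if_pos (by omega))]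
      rw [← Finset.Ico_add_one_right_eq_Icc, Finset.sum_Ico_eq_sum_range]
      have hA : d - t + 1 - k = (d - t - k) + 1 := by omega
      rw [hA]
      set A := d - t - k with hAdef
      have step : ∀ r ∈ Finset.range (A + 1),
          (-1:ℤ)^(k+r-k) * (((k+r-m).choose (k+r-k) : ℤ)) * ((N.choose (k+r-s) : ℤ))
          = Ring.choose (-(c:ℤ) - 1) r * ((N.choose (A - r) : ℤ)) := by
        intro r hr
        simp only [Finset.mem_range] at hr
        rw [choose_int_neg r c]
        have h1 : k + r - k = r := by omega
        have h2 : k + r - m = r + c := by omega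
        have h3 : N.choose (k + r - s) = N.choose (A - r) := by
          have h4 : k + r - s = N - (A - r) := by omega
          rw [h4, Nat.choose_symm (by omega)]
        rw [h1, h2, h3]
        try ring
      rw [Finset.sum_congr rfl step, ← choose_int_vandermonde]
      exact choose_int_eq_zero (by omega) (by push_cast; omega)
    · -- indicator: restrict to Icc s (d - t)
      have hsub2 : Finset.Icc s (d - t) ⊆ Finset.Icc k (d - t) := by
        apply Finset.Icc_subset_Icc_left; omega
      rw [← Finset.sum_subset hsub2 (fun i hi hni => by
        simp only [Finset.mem_Icc] at hi hni
        rw [if_neg]; omega)]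
      rw [Finset.sum_congr rfl (fun i hi => by
        simp only [Finset.mem_Icc] at hi
        exact if_pos hi.1)]
      rw [← Finset.Ico_add_one_right_eq_Icc, Finset.sum_Ico_eq_sum_range]
      have hA : d - t + 1 - s = N + 1 := by omega
      rw [hA]
      have step : ∀ q ∈ Finset.range (N + 1),
          (-1:ℤ)^(s+q-k) * (((s+q-m).choose (s+q-k) : ℤ)) * ((N.choose (s+q-s) : ℤ))
          = (-1:ℤ)^(s-k) * ((-1:ℤ)^q * (N.choose q : ℤ) * Ring.choose (((s:ℤ) - m) + q) c) := by
        intro q hq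
        have h1 : s + q - s = q := by omega
        have h2 : s + q - k = (s - k) + q := by omega
        have h3 : (s+q-m).choose (s+q-k) = (s+q-m).choose c := by
          have h4 : s + q - k = (s + q - m) - c := by omega
          rw [h4, Nat.choose_symm (by omega)]
        have h5 : Ring.choose (((s:ℤ) - m) + q) c = ((s + q - m).choose c : ℤ) := by
          rw [show ((s:ℤ) - m) + q = ((s + q - m : ℕ) : ℤ) by push_cast [Nat.cast_sub]; omega]
          exact choose_int_natCast _ _
        rw [h1, h3, h2, h5, pow_add]
        ring
      rw [Finset.sum_congr rfl step, ← Finset.mul_sum]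
      have hG : ∑ q ∈ Finset.range (N + 1),
          (-1:ℤ)^q * (N.choose q : ℤ) * Ring.choose (((s:ℤ) - m) + q) c
          = Gsum N (fun q => Ring.choose (((s:ℤ) - m) + q) c) := rfl
      rw [hG, Gsum_choose_add c N ((s:ℤ) - m) (by omega), mul_zero]

lemma choose_cast_rat (x : ℤ) (k : ℕ) :
    Ring.choose ((x : ℚ)) k = ((Ring.choose x k : ℤ) : ℚ) := by
  have h1 := Ring.descPochhammer_eq_factorial_smul_choose ((x:ℚ)) k
  have h2 := Ring.descPochhammer_eq_factorial_smul_choose x k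
  have h3 : (descPochhammer ℤ k).smeval ((x : ℚ)) = (((descPochhammer ℤ k).smeval x : ℤ) : ℚ) := by
    rw [← Polynomial.aeval_eq_smeval, ← Polynomial.eval_eq_smeval,
      show ((x:ℚ)) = algebraMap ℤ ℚ x from rfl, Polynomial.aeval_algebraMap_apply]
    simp [Polynomial.aeval_eq_smeval, Polynomial.eval_eq_smeval]
  rw [h1, h2] at h3
  push_cast at h3
  have hk : (k.factorial : ℚ) ≠ 0 := by positivity
  simp only [nsmul_eq_mul, Int.cast_mul, Int.cast_natCast, mul_eq_mul_left_iff, Nat.cast_eq_zero] at h3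
  rcases h3 with h | h
  · exact h
  · exact absurd (Nat.cast_eq_zero.mpr h : (k.factorial:ℚ) = 0) hk

lemma choose_cast_rat' (x : ℤ) (y : ℚ) (k : ℕ) (h : y = (x : ℚ)) :
    Ring.choose y k = ((Ring.choose x k : ℤ) : ℚ) := by rw [h, choose_cast_rat]

lemma neg_one_zpow_sub_nat (x : ℤ) (j : ℕ) :
    (-1 : ℚ) ^ (x - j) = (-1 : ℚ) ^ x * (-1 : ℚ) ^ j := by
  rw [zpow_sub₀ (by norm_num : (-1:ℚ) ≠ 0), zpow_natCast, div_eq_mul_inv, ← inv_pow, inv_neg_one]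




/-- Core computation of Lemma 4.5: in the linear combination
`S = ∑_{i=k}^{d-n} ∑_{j=0}^{d-i} (-1)^{i-k+l-1-j} C(i-m,i-k) C(d-i-n+l-1-j,d-i-n) b_{(i,j)}`
with `b_{(i,j)} = ∑_{s'=0}^{i} ∑_{t'=0}^{d-i-j} (-1)^{d-t'-s'} C(d-t'-s',i-s') C(d-i-t',j)
a_{(d-t'-s',s')}`, the coefficient of the variable `a_{(d-t-s,s)}` vanishes whenever
`n ≤ t ≤ d-k` and `m ≤ s < d-t-k+m`. The inner `if` picks out exactly the occurrences of
`a_{(d-t-s,s)}` (i.e. `s' = s`, `t' = t`). -/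
theorem stmt11 (d k n l m t s : ℕ)
    (hkn : k + n ≤ d) (hl : l ≤ n + 1) (hm : m ≤ k + 1)
    (htlow : n ≤ t) (hthigh : t ≤ d - k)
    (hslow : m ≤ s) (hshigh : s + t + k < d + m) :
    ∑ i ∈ Finset.Icc k (d - n), ∑ j ∈ Finset.range (d - i + 1),
      (if s ≤ i ∧ i + t + j ≤ d then
        (-1 : ℚ) ^ ((i : ℤ) - k + l - 1 - j) *
          (Ring.choose ((i : ℤ) - m) (i - k) : ℚ) *
          (Ring.choose ((d : ℤ) - i - n + l - 1 - j) (d - i - n) : ℚ) *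
          (-1 : ℚ) ^ ((d : ℤ) - t - s) *
          (Ring.choose ((d : ℤ) - t - s) (i - s) : ℚ) *
          (Ring.choose ((d : ℤ) - i - t) j : ℚ)
      else 0) = 0 := by
  have hkd : k ≤ d := by omega
  have hkt : k + t ≤ d := by omega
  have hstd : s + t ≤ d := by omega
  set c₂ : ℚ := (-1:ℚ)^((l:ℤ)-1) * (-1:ℚ)^((d:ℤ)-(t:ℤ)-(s:ℤ)) *
    ((Ring.choose ((t:ℤ)-(n:ℤ)+(l:ℤ)-1) (t-n) : ℤ) : ℚ) with hc₂
  have key : ∀ i ∈ Finset.Icc k (d - n),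
      (∑ j ∈ Finset.range (d - i + 1),
        (if s ≤ i ∧ i + t + j ≤ d then
          (-1 : ℚ) ^ ((i : ℤ) - k + l - 1 - j) *
            (Ring.choose ((i : ℤ) - m) (i - k) : ℚ) *
            (Ring.choose ((d : ℤ) - i - n + l - 1 - j) (d - i - n) : ℚ) *
            (-1 : ℚ) ^ ((d : ℤ) - t - s) *
            (Ring.choose ((d : ℤ) - t - s) (i - s) : ℚ) *
            (Ring.choose ((d : ℤ) - i - t) j : ℚ)
        else 0))
      = c₂ * (((if s ≤ i ∧ i + t ≤ d then
          (-1:ℤ)^(i-k) * ((i-m).choose (i-k)) * (((d-t-s).choose (i-s) : ℤ)) else 0) : ℤ) : ℚ) := by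
    intro i hi
    simp only [Finset.mem_Icc] at hi
    obtain ⟨hki, hidn⟩ := hi
    have hind : i + n ≤ d := by omega
    by_cases hcond : s ≤ i ∧ i + t ≤ d
    · obtain ⟨hsi, hit⟩ := hcond
      set D := d - i - t with hD
      set cc := d - i - n with hcc
      set b : ℤ := (d:ℤ) - i - n + (l:ℤ) - 1 with hb
      have hDc : D ≤ cc := by omega
      have hsubj : Finset.range (D + 1) ⊆ Finset.range (d - i + 1) :=
        Finset.range_subset_range.mpr (by omega)
      rw [← Finset.sum_subset hsubj (fun j hj hnj => by
        rw [if_neg]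
        simp only [Finset.mem_range] at hj hnj
        intro ⟨_, h2⟩
        omega)]
      have step : ∀ j ∈ Finset.range (D + 1),
          (if s ≤ i ∧ i + t + j ≤ d then
            (-1 : ℚ) ^ ((i : ℤ) - k + l - 1 - j) *
              (Ring.choose ((i : ℤ) - m) (i - k) : ℚ) *
              (Ring.choose ((d : ℤ) - i - n + l - 1 - j) (d - i - n) : ℚ) *
              (-1 : ℚ) ^ ((d : ℤ) - t - s) *
              (Ring.choose ((d : ℤ) - t - s) (i - s) : ℚ) *
              (Ring.choose ((d : ℤ) - i - t) j : ℚ)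
          else 0)
          = ((-1 : ℚ) ^ ((i : ℤ) - (k:ℤ) + (l:ℤ) - 1) *
              ((Ring.choose ((i:ℤ) - (m:ℤ)) (i - k) : ℤ) : ℚ) *
              (-1 : ℚ) ^ ((d : ℤ) - (t:ℤ) - (s:ℤ)) *
              ((Ring.choose ((d:ℤ) - (t:ℤ) - (s:ℤ)) (i - s) : ℤ) : ℚ)) *
            ((((-1:ℤ)^j * (D.choose j : ℤ) * Ring.choose (b - (j:ℤ)) cc : ℤ)) : ℚ) := by
        intro j hj
        simp only [Finset.mem_range] at hj
        rw [if_pos ⟨hsi, by omega⟩]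
        rw [neg_one_zpow_sub_nat ((i:ℤ) - k + l - 1) j]
        rw [choose_cast_rat' ((i:ℤ) - (m:ℤ)) _ (i - k) (by push_cast; ring)]
        rw [choose_cast_rat' (b - (j:ℤ)) _ (d - i - n) (by rw [hb]; push_cast; ring)]
        rw [choose_cast_rat' ((d:ℤ) - (t:ℤ) - (s:ℤ)) _ (i - s) (by push_cast; ring)]
        rw [choose_cast_rat' (((D:ℕ)) : ℤ) _ j (by rw [show ((D:ℕ):ℤ) = (d:ℤ) - i - t by omega]; push_cast; ring)]
        rw [choose_int_natCast D j]
        push_cast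
        ring
      rw [Finset.sum_congr rfl step, ← Finset.mul_sum]
      have hG : ∑ j ∈ Finset.range (D + 1),
          (((-1:ℤ)^j * (D.choose j : ℤ) * Ring.choose (b - (j:ℤ)) cc : ℤ) : ℚ)
          = ((Gsum D (fun j => Ring.choose (b - (j:ℤ)) cc) : ℤ) : ℚ) := by
        rw [Gsum]
        push_cast
        rfl
      rw [hG, Gsum_choose_sub D b cc hDc]
      have hbd : b - (D:ℤ) = (t:ℤ) - (n:ℤ) + (l:ℤ) - 1 := by
        rw [hb]; omega
      have hccD : cc - D = t - n := by omega
      rw [hbd, hccD, if_pos ⟨hsi, hit⟩]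
      have hsgn : (-1 : ℚ) ^ ((i : ℤ) - (k:ℤ) + (l:ℤ) - 1)
          = (-1:ℚ)^(i-k : ℕ) * (-1:ℚ)^((l:ℤ)-1) := by
        rw [show (i:ℤ) - (k:ℤ) + (l:ℤ) - 1 = ((i - k : ℕ) : ℤ) + ((l:ℤ) - 1) by push_cast; omega,
          zpow_add₀ (by norm_num : (-1:ℚ) ≠ 0), zpow_natCast]
      have him : Ring.choose ((i:ℤ) - (m:ℤ)) (i - k) = (((i-m).choose (i-k) : ℕ) : ℤ) := by
        rw [show (i:ℤ) - (m:ℤ) = ((i - m : ℕ) : ℤ) by push_cast; omega]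
        exact choose_int_natCast _ _
      have hdts : Ring.choose ((d:ℤ) - (t:ℤ) - (s:ℤ)) (i - s)
          = (((d-t-s).choose (i-s) : ℕ) : ℤ) := by
        rw [show (d:ℤ) - (t:ℤ) - (s:ℤ) = ((d - t - s : ℕ) : ℤ) by push_cast; omega]
        exact choose_int_natCast _ _
      rw [him, hdts, hsgn, hc₂]
      push_cast
      ring
    · rw [if_neg hcond, Int.cast_zero, mul_zero]
      apply Finset.sum_eq_zero
      intro j hj
      rw [if_neg]
      intro ⟨h1, h2⟩
      exact hcond ⟨h1, by omega⟩
  rw [Finset.sum_congr rfl key, ← Finset.mul_sum, ← Int.cast_sum,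
    keysum d k n m t s hm hkt htlow hslow hshigh, Int.cast_zero, mul_zero]
end
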